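/- Let G be a graph and M = M[IAS(G)]. Then for every X ⊆ V, the rank of τ_G(X) in M equals |X| + c_G(X), and the connectivity function satisfies λ(τ_G(X)) = 2·c_G(X). -/

import Mathlib

open scoped ENat

variable {V : Type*} [Fintype V] [DecidableEq V]

/-- The column of the matrix `IAS(G) = (I | A | A+I)` indexed by `(v, i)`:
`i = 0` gives `φ(v)` (identity column), `i = 1` gives `χ(v)` (column of `A`),
`i = 2` gives `ψ(v)` (column of `A + I`). -/
def iasCol (A : Matrix V V (ZMod 2)) : V × Fin 3 → V → ZMod 2 :=
  fun p w =>
    if p.2 = 0 then (if w = p.1 then 1 else 0)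
    else if p.2 = 1 then A w p.1
    else A w p.1 + (if w = p.1 then 1 else 0)

/-- The rank of a subset of the ground set `W(G) = V × Fin 3` of the isotropic
matroid: the GF(2)-rank of the corresponding set of columns. -/
noncomputable def iasRank (A : Matrix V V (ZMod 2)) (S : Set (V × Fin 3)) : ℕ :=
  Module.finrank (ZMod 2) (Submodule.span (ZMod 2) (iasCol A '' S))

/-- The connectivity function `λ(S) = r(S) + r(W - S) - r(M)`. -/
noncomputable def iasLambda (A : Matrix V V (ZMod 2)) (S : Set (V × Fin 3)) : ℕ :=
  iasRank A S + iasRank A Sᶜ - iasRank A Set.univ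

/-- Independence in the isotropic matroid. -/
def iasIndep (A : Matrix V V (ZMod 2)) (S : Set (V × Fin 3)) : Prop :=
  LinearIndependent (ZMod 2) (fun s : S => iasCol A s.1)

/-- Circuits of the isotropic matroid: minimal dependent sets. -/
def iasCircuit (A : Matrix V V (ZMod 2)) (C : Set (V × Fin 3)) : Prop :=
  ¬ iasIndep A C ∧ ∀ S ⊂ C, iasIndep A S

/-- An ordinary `k`-separation: `λ(S) < k` and `|S|, |W - S| ≥ k`. -/
def OrdinarySep (A : Matrix V V (ZMod 2)) (k : ℕ) (S : Set (V × Fin 3)) : Prop :=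
  0 < k ∧ iasLambda A S < k ∧ k ≤ S.ncard ∧ k ≤ Sᶜ.ncard

/-- A cyclic `k`-separation: `λ(S) < k` and both `S` and `W - S` are dependent. -/
def CyclicSep (A : Matrix V V (ZMod 2)) (k : ℕ) (S : Set (V × Fin 3)) : Prop :=
  0 < k ∧ iasLambda A S < k ∧ ¬ iasIndep A S ∧ ¬ iasIndep A Sᶜ

/-- A vertical `k`-separation: `λ(S) < k` and `r(S), r(W - S) ≥ k`. -/
def VerticalSep (A : Matrix V V (ZMod 2)) (k : ℕ) (S : Set (V × Fin 3)) : Prop :=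
  0 < k ∧ iasLambda A S < k ∧ k ≤ iasRank A S ∧ k ≤ iasRank A Sᶜ

/-- `τ(M) = min {k : M has an ordinary k-separation}`, with `min ∅ = ∞`. -/
noncomputable def iasTau (A : Matrix V V (ZMod 2)) : ℕ∞ :=
  sInf {k : ℕ∞ | ∃ m : ℕ, (m : ℕ∞) = k ∧ ∃ S, OrdinarySep A m S}

/-- `κ*(M) = min ({k : M has a cyclic k-separation} ∪ {|W| - r(M)})`. -/
noncomputable def iasKappaStar (A : Matrix V V (ZMod 2)) : ℕ :=
  sInf ({k : ℕ | ∃ S, CyclicSep A k S} ∪ {3 * Fintype.card V - iasRank A Set.univ})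

/-- `κ(M) = min ({k : M has a vertical k-separation} ∪ {r(M)})`. -/
noncomputable def iasKappa (A : Matrix V V (ZMod 2)) : ℕ :=
  sInf ({k : ℕ | ∃ S, VerticalSep A k S} ∪ {iasRank A Set.univ})

/-- The simple graph underlying a looped simple graph given by its adjacency matrix. -/
def toSimpleGraph (A : Matrix V V (ZMod 2)) : SimpleGraph V where
  Adj v w := v ≠ w ∧ A v w = 1 ∧ A w v = 1
  symm := ⟨fun v w ⟨h1, h2, h3⟩ => ⟨Ne.symm h1, h3, h2⟩⟩
  loopless := ⟨fun v h => h.1 rfl⟩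

/-- The open neighborhood `N_G(v)`. -/
def nbhd (A : Matrix V V (ZMod 2)) (v : V) : Set V := {u | u ≠ v ∧ A v u = 1}

/-- `v` is a pendant vertex: `N_G(v) = {w}` for some `w`. -/
def IsPendant (A : Matrix V V (ZMod 2)) (v : V) : Prop := ∃ w, nbhd A v = {w}

/-- `G` has a pair of twin vertices: `v ≠ w` with `N_G(v) - {w} = N_G(w) - {v}`. -/
def HasTwins (A : Matrix V V (ZMod 2)) : Prop :=
  ∃ v w, v ≠ w ∧ nbhd A v \ {w} = nbhd A w \ {v}

/-- The cut-rank `c_G(X)`: the GF(2)-rank of the submatrix `A[V - X, X]`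
(columns indexed by `X`, rows indexed by `V - X`). -/
noncomputable def cutRank (A : Matrix V V (ZMod 2)) (X : Set V) : ℕ :=
  Module.finrank (ZMod 2)
    (Submodule.span (ZMod 2) ((fun x : V => fun w : ↥(Xᶜ) => A w.1 x) '' X))

/-- `τ_G(X) = ⋃_{x ∈ X} τ_G(x)`, the union of the vertex triples of members of `X`. -/
def tauSet (X : Set V) : Set (V × Fin 3) := {p | p.1 ∈ X}

/-- Loop complementation at `v`. -/
def loopComp (A : Matrix V V (ZMod 2)) (v : V) : Matrix V V (ZMod 2) :=
  fun x y => A x y + if x = v ∧ y = v then 1 else 0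

/-- Simple local complementation at `v`. -/
def simpleLocalComp (A : Matrix V V (ZMod 2)) (v : V) : Matrix V V (ZMod 2) :=
  fun x y => A x y +
    if x ≠ y ∧ (x ≠ v ∧ A v x = 1) ∧ (y ≠ v ∧ A v y = 1) then 1 else 0

/-- Non-simple local complementation at `v`. -/
def nonSimpleLocalComp (A : Matrix V V (ZMod 2)) (v : V) : Matrix V V (ZMod 2) :=
  fun x y => simpleLocalComp A v x y + if x = y ∧ x ≠ v ∧ A v x = 1 then 1 else 0

/-- One local move. -/
def LocalStep (A B : Matrix V V (ZMod 2)) : Prop :=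
  ∃ v, B = loopComp A v ∨ B = simpleLocalComp A v ∨ B = nonSimpleLocalComp A v

/-- Local equivalence: a finite sequence of loop complementations and
(simple or non-simple) local complementations. -/
def LocallyEquiv (A B : Matrix V V (ZMod 2)) : Prop :=
  Relation.ReflTransGen LocalStep A B

/-- `G` has a split: a bipartition `(V₁, V₂)` of `V` with `|V₁|, |V₂| ≥ 2` such that the
GF(2)-rank of `A[V₁, V₂]` is at most 1. -/
def HasSplit (A : Matrix V V (ZMod 2)) : Prop :=
  ∃ X : Set V, 2 ≤ X.ncard ∧ 2 ≤ Xᶜ.ncard ∧ cutRank A X ≤ 1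

/-- A transverse circuit: a circuit of the isotropic matroid meeting each
vertex triple at most once. -/
def IsTransverseCircuit (A : Matrix V V (ZMod 2)) (C : Set (V × Fin 3)) : Prop :=
  iasCircuit A C ∧ ∀ p ∈ C, ∀ q ∈ C, p.1 = q.1 → p = q

/-- An isotropic `k`-separation of `G`: `|X|, |V - X| ≥ k` and `c_G(X) < k`. -/
def IsotropicSep (A : Matrix V V (ZMod 2)) (k : ℕ) (X : Set V) : Prop :=
  k ≤ X.ncard ∧ k ≤ Xᶜ.ncard ∧ cutRank A X < k

/-- The isotropic connectivity `κ_B(G)`, with `min ∅ = ∞`. -/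
noncomputable def kappaB (A : Matrix V V (ZMod 2)) : ℕ∞ :=
  sInf {j : ℕ∞ | ∃ k : ℕ, (k : ℕ∞) = j ∧ ∃ X, IsotropicSep A k X}

/-- The 5-cycle `C₅`. -/
def C5mat : Matrix (Fin 5) (Fin 5) (ZMod 2) :=
  fun i j => if (i.val + 1) % 5 = j.val ∨ (j.val + 1) % 5 = i.val then 1 else 0

/-- The wheel `W₅` : a 5-cycle on `{0,…,4}` plus a hub `5` adjacent to all. -/
def W5mat : Matrix (Fin 6) (Fin 6) (ZMod 2) :=
  fun i j =>
    if (i.val = 5 ∧ j.val ≠ 5) ∨ (j.val = 5 ∧ i.val ≠ 5) then 1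
    else if i.val ≠ 5 ∧ j.val ≠ 5 ∧ ((i.val + 1) % 5 = j.val ∨ (j.val + 1) % 5 = i.val) then 1
    else 0
open scoped Classical in
/-- `ker` of the restriction map to `Xᶜ` is the span of the `φ` columns of `X`. -/
lemma ker_resMap (X : Set V) :
    LinearMap.ker (LinearMap.funLeft (ZMod 2) (ZMod 2) (Subtype.val : ↥Xᶜ → V)) =
      Submodule.span (ZMod 2) ((fun v => Pi.single v (1 : ZMod 2)) '' X) := by
  apply le_antisymm
  · intro g hg
    have hg' : ∀ w, w ∉ X → g w = 0 := fun w hw => congrFun hg ⟨w, hw⟩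
    have hrepr : g = ∑ v ∈ Finset.univ.filter (· ∈ X), g v • Pi.single v (1 : ZMod 2) := by
      funext w
      rw [Finset.sum_apply]
      by_cases hw : w ∈ X
      · rw [Finset.sum_eq_single w]
        · simp
        · intro v _ hvw
          simp [Pi.single_apply, hvw.symm]
        · intro h
          exact absurd (Finset.mem_filter.mpr ⟨Finset.mem_univ w, hw⟩) h
      · rw [hg' w hw, Finset.sum_eq_zero]
        intro v hv
        have hvX := (Finset.mem_filter.mp hv).2
        have : w ≠ v := fun h => hw (h ▸ hvX)
        simp [Pi.single_apply, this]
    rw [hrepr]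
    exact Submodule.sum_mem _ fun v hv =>
      Submodule.smul_mem _ _
        (Submodule.subset_span ⟨v, (Finset.mem_filter.mp hv).2, rfl⟩)
  · rw [Submodule.span_le]
    rintro _ ⟨v, hv, rfl⟩
    simp only [SetLike.mem_coe, LinearMap.mem_ker]
    funext w
    have : (w : V) ≠ v := fun h => w.2 (h ▸ hv)
    simp [LinearMap.funLeft, Pi.single_apply, this]

open scoped Classical in
lemma finrank_span_singles (X : Set V) :
    Module.finrank (ZMod 2)
      (Submodule.span (ZMod 2) ((fun v => Pi.single v (1 : ZMod 2)) '' X)) = X.ncard := by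
  haveI : Fintype ↥X := Fintype.ofFinite _
  have hli : LinearIndependent (ZMod 2)
      (fun v : ↥X => (Pi.single (v : V) (1 : ZMod 2) : V → ZMod 2)) := by
    have := ((Pi.basisFun (ZMod 2) V).linearIndependent).comp
      (Subtype.val : ↥X → V) Subtype.val_injective
    simpa [Function.comp_def, Pi.basisFun_apply] using this
  have := finrank_span_eq_card hli
  rw [Set.image_eq_range, this, Set.ncard_eq_toFinset_card', Set.toFinset_card]

open scoped Classical in
lemma iasSpan_eq (A : Matrix V V (ZMod 2)) (X : Set V) :
    Submodule.span (ZMod 2) (iasCol A '' tauSet X) =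
      Submodule.span (ZMod 2) ((fun v => Pi.single v (1 : ZMod 2)) '' X) ⊔
        Submodule.span (ZMod 2) ((fun v => fun w => A w v) '' X) := by
  apply le_antisymm
  · rw [Submodule.span_le]
    rintro _ ⟨⟨v, i⟩, hv, rfl⟩
    have hv' : v ∈ X := hv
    have h0 : (Pi.single v (1 : ZMod 2) : V → ZMod 2) ∈
        (Submodule.span (ZMod 2) ((fun v => Pi.single v (1 : ZMod 2)) '' X) ⊔
          Submodule.span (ZMod 2) ((fun v => fun w => A w v) '' X)) :=
      Submodule.mem_sup_left (Submodule.subset_span ⟨v, hv', rfl⟩)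
    have h1 : (fun w => A w v) ∈
        (Submodule.span (ZMod 2) ((fun v => Pi.single v (1 : ZMod 2)) '' X) ⊔
          Submodule.span (ZMod 2) ((fun v => fun w => A w v) '' X)) :=
      Submodule.mem_sup_right (Submodule.subset_span ⟨v, hv', rfl⟩)
    fin_cases i
    · exact Set.mem_of_eq_of_mem
        (funext fun w => by simp [iasCol, Pi.single_apply]) h0
    · exact Set.mem_of_eq_of_mem
        (funext fun w => by simp [iasCol]) h1
    · exact Set.mem_of_eq_of_mem
        (funext fun w => by simp [iasCol, Pi.single_apply]) (add_mem h1 h0)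
  · apply sup_le <;> rw [Submodule.span_le] <;> rintro _ ⟨v, hv, rfl⟩
    · exact Set.mem_of_eq_of_mem (funext fun w => by simp [iasCol, Pi.single_apply])
        (Submodule.subset_span ⟨(v, 0), hv, rfl⟩)
    · exact Set.mem_of_eq_of_mem (funext fun w => by simp [iasCol])
        (Submodule.subset_span ⟨(v, 1), hv, rfl⟩)

set_option synthInstance.maxHeartbeats 1000000 in
set_option maxHeartbeats 1000000 in
open scoped Classical in
lemma iasRank_tau (A : Matrix V V (ZMod 2)) (X : Set V) :
    iasRank A (tauSet X) = X.ncard + cutRank A X := by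
  set E : Set (V → ZMod 2) := (fun v => Pi.single v (1 : ZMod 2)) '' X with hE
  set C : Set (V → ZMod 2) := (fun v => fun w => A w v) '' X with hC
  set π : (V → ZMod 2) →ₗ[ZMod 2] (↥Xᶜ → ZMod 2) :=
    LinearMap.funLeft (ZMod 2) (ZMod 2) (Subtype.val : ↥Xᶜ → V) with hπ
  set P : Submodule (ZMod 2) (V → ZMod 2) :=
    Submodule.span (ZMod 2) E ⊔ Submodule.span (ZMod 2) C with hP
  have hrank : iasRank A (tauSet X) = Module.finrank (ZMod 2) P := by
    rw [iasRank, iasSpan_eq]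
  set f : P →ₗ[ZMod 2] (↥Xᶜ → ZMod 2) := π.comp P.subtype with hf
  have hrn := (LinearMap.finrank_range_add_finrank_ker f).symm
  have hrange : LinearMap.range f = Submodule.map π P := by
    rw [hf, LinearMap.range_comp, Submodule.range_subtype]
  have hπE : Submodule.map π (Submodule.span (ZMod 2) E) = ⊥ := by
    rw [Submodule.map_span, Submodule.span_eq_bot]
    rintro _ ⟨_, ⟨v, hv, rfl⟩, rfl⟩
    funext w
    have : (w : V) ≠ v := fun h => w.2 (h ▸ hv)
    simp [hπ, LinearMap.funLeft, Pi.single_apply, this]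
  have hπC : Submodule.map π (Submodule.span (ZMod 2) C) =
      Submodule.span (ZMod 2) ((fun x : V => fun w : ↥Xᶜ => A w.1 x) '' X) := by
    rw [Submodule.map_span, hC, ← Set.image_comp]
    rfl
  have hrange' : Module.finrank (ZMod 2) (LinearMap.range f) = cutRank A X := by
    rw [hrange, hP, Submodule.map_sup, hπE, hπC, bot_sup_eq, cutRank]
  have hkerf : LinearMap.ker f = Submodule.comap P.subtype (Submodule.span (ZMod 2) E) := by
    rw [hf, LinearMap.ker_comp, ker_resMap]
  have hEP : Submodule.span (ZMod 2) E ≤ P := le_sup_left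
  have hker' : Module.finrank (ZMod 2) (LinearMap.ker f) = X.ncard := by
    rw [hkerf, LinearEquiv.finrank_eq (Submodule.comapSubtypeEquivOfLe hEP),
      finrank_span_singles]
  rw [hrank, hrn, hrange', hker']
  omega

open scoped Classical in
lemma cutRank_compl (A : Matrix V V (ZMod 2)) (hA : A.IsSymm) (X : Set V) :
    cutRank A Xᶜ = cutRank A X := by
  letI : Fintype ↥X := Fintype.ofFinite _
  letI : Fintype ↥(Xᶜ) := Fintype.ofFinite _
  set M : Matrix ↥Xᶜ ↥X (ZMod 2) := Matrix.of fun (w : ↥Xᶜ) (x : ↥X) => A w.1 x.1 with hM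
  have hX : cutRank A X = M.rank := by
    rw [cutRank, Set.image_eq_range, Matrix.rank_eq_finrank_span_cols]
    rfl
  let e : ↥X ≃ ↥((Xᶜ)ᶜ) :=
    ⟨fun w => ⟨w.1, by simp⟩, fun w => ⟨w.1, by simpa using w.2⟩,
      fun w => rfl, fun w => rfl⟩
  have hmap : cutRank A Xᶜ =
      Module.finrank (ZMod 2) (Submodule.span (ZMod 2)
        ((fun x : V => fun w : ↥X => A w.1 x) '' Xᶜ)) := by
    have himg : (⇑((LinearEquiv.funCongrLeft (ZMod 2) (ZMod 2) e :
          (↥((Xᶜ)ᶜ) → ZMod 2) ≃ₗ[ZMod 2] (↥X → ZMod 2)) :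
          (↥((Xᶜ)ᶜ) → ZMod 2) →ₗ[ZMod 2] (↥X → ZMod 2)) ''
        ((fun x : V => fun w : ↥((Xᶜ)ᶜ) => A w.1 x) '' Xᶜ)) =
        ((fun x : V => fun w : ↥X => A w.1 x) '' Xᶜ) := by
      rw [← Set.image_comp]
      apply Set.image_congr
      intro x _
      funext w
      show A ((e w : V)) x = A (w : V) x
      rfl
    rw [cutRank, ← LinearEquiv.finrank_map_eq
      (LinearEquiv.funCongrLeft (ZMod 2) (ZMod 2) e), Submodule.map_span, himg]
  have hcols : Set.range (fun x : ↥Xᶜ => fun w : ↥X => A w.1 x.1) = Set.range (Matrix.col M.transpose) := by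
    refine congrArg _ (funext fun x => funext fun w => ?_)
    exact (hA.apply _ _).symm
  rw [hmap, Set.image_eq_range, hcols, ← Matrix.rank_eq_finrank_span_cols,
    Matrix.rank_transpose, hX]

lemma tauSet_compl (X : Set V) : (tauSet X)ᶜ = tauSet Xᶜ := rfl

open scoped Classical in
lemma iasRank_univ (A : Matrix V V (ZMod 2)) :
    iasRank A Set.univ = Fintype.card V := by
  have h : (Set.univ : Set (V × Fin 3)) = tauSet (Set.univ : Set V) := by
    ext p; simp [tauSet]
  rw [h, iasRank_tau, Set.ncard_univ, Nat.card_eq_fintype_card]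
  have hsub : Subsingleton (↥((Set.univ : Set V)ᶜ) → ZMod 2) := by
    haveI : IsEmpty ↥((Set.univ : Set V)ᶜ) := by
      rw [Set.compl_univ]; infer_instance
    infer_instance
  have : cutRank A (Set.univ : Set V) = 0 := by
    unfold cutRank
    have : ((fun x : V => fun w : ↥((Set.univ : Set V)ᶜ) => A w.1 x) '' Set.univ) ⊆ {0} := by
      intro g _; exact Subsingleton.elim g 0
    rw [show Submodule.span (ZMod 2)
        ((fun x : V => fun w : ↥((Set.univ : Set V)ᶜ) => A w.1 x) '' Set.univ) = ⊥ from
      le_bot_iff.mp (Submodule.span_le.mpr (this.trans (by simp)))]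
    exact finrank_bot _ _
  omega

theorem stmt3 (A : Matrix V V (ZMod 2)) (hA : A.IsSymm) :
    ∀ X : Set V,
      iasRank A (tauSet X) = X.ncard + cutRank A X ∧
      iasLambda A (tauSet X) = 2 * cutRank A X := by
  intro X
  have h1 := iasRank_tau A X
  have h2 := iasRank_tau A Xᶜ
  refine ⟨h1, ?_⟩
  rw [iasLambda, tauSet_compl, h1, h2, iasRank_univ, cutRank_compl A hA X]
  have hcard : X.ncard + Xᶜ.ncard = Fintype.card V := by
    rw [Set.ncard_add_ncard_compl X, Nat.card_eq_fintype_card]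
  omega
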